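/- arXiv:2211.12765 — 7 statements merged into one kernel-verified Lean document; each statement's English description precedes it below -/
import Mathlib

section
/- Theorem 4.2 (controllability criterion): The SLS under logically generated switching is controllable if and only if there exist T ≥ 1 and a logical input sequence γ : Fin T → Fin M such that for every initial logical state α ∈ Fin N, letting σ be the switching-signal sequence generated from α by γ, one has LinearMap.range (Matrix.mulVecLin (A (σ (T−1)) * A (σ (T−2)) * ⋯ * A (σ 0))) ≤ ⨆_{t = 0}^{T−1} LinearMap.range (Matrix.mulVecLin (A (σ (T−1)) * ⋯ * A (σ (t+1)) * B (σ t))) (for t = T−1 the latter product is just B (σ (T−1))). -/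
/-- Extension of a finite sequence `γ : Fin T → α` (with `T ≥ 1`) to `ℕ`,
agreeing with `γ` on `t < T`. -/
def extSeq {α : Type*} {T : ℕ} (hT : 0 < T) (γ : Fin T → α) : ℕ → α :=
  fun t => γ ⟨min t (T - 1), by omega⟩

/-- The logical state sequence generated from `θ₀` by the logical inputs `γ`:
`θ 0 = θ₀`, `θ (t+1) = L (γ t) (θ t)`. -/
def logicState {N M : ℕ} (L : Fin M → Fin N → Fin N) (θ₀ : Fin N)
    (γ : ℕ → Fin M) : ℕ → Fin N
  | 0 => θ₀
  | t + 1 => L (γ t) (logicState L θ₀ γ t)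

/-- The switching signal generated from `θ₀` by the logical inputs `γ`:
`σ t = R (γ t) (θ t)`. -/
def switchSig {q N M : ℕ} (L : Fin M → Fin N → Fin N) (R : Fin M → Fin N → Fin q)
    (θ₀ : Fin N) (γ : ℕ → Fin M) : ℕ → Fin q :=
  fun t => R (γ t) (logicState L θ₀ γ t)

/-- The state trajectory of the switched linear system:
`x 0 = x₀`, `x (t+1) = A (σ t) *ᵥ x t + B (σ t) *ᵥ u t`. -/
def traj {n m q : ℕ} (A : Fin q → Matrix (Fin n) (Fin n) ℝ)
    (B : Fin q → Matrix (Fin n) (Fin m) ℝ) (σ : ℕ → Fin q)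
    (u : ℕ → Fin m → ℝ) (x₀ : Fin n → ℝ) : ℕ → Fin n → ℝ
  | 0 => x₀
  | t + 1 => (A (σ t)).mulVec (traj A B σ u x₀ t) + (B (σ t)).mulVec (u t)

/-- `transMat A σ s t = A (σ (t-1)) * A (σ (t-2)) * ⋯ * A (σ s)` for `s ≤ t`
(and `1` when `t ≤ s`). -/
def transMat {n q : ℕ} (A : Fin q → Matrix (Fin n) (Fin n) ℝ) (σ : ℕ → Fin q)
    (s : ℕ) : ℕ → Matrix (Fin n) (Fin n) ℝ
  | 0 => 1
  | t + 1 => if s ≤ t then A (σ t) * transMat A σ s t else 1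

/-- Reachability of the SLS under logically generated switching. -/
def ReachableSLS {n m q N M : ℕ} (A : Fin q → Matrix (Fin n) (Fin n) ℝ)
    (B : Fin q → Matrix (Fin n) (Fin m) ℝ) (L : Fin M → Fin N → Fin N)
    (R : Fin M → Fin N → Fin q) : Prop :=
  ∀ (x : Fin n → ℝ) (θ₀ : Fin N), ∃ T : ℕ, ∃ hT : 1 ≤ T, ∃ γ : Fin T → Fin M,
    ∃ u : Fin T → (Fin m → ℝ),
      traj A B (switchSig L R θ₀ (extSeq hT γ)) (extSeq hT u) 0 T = x

/-- Controllability of the SLS under logically generated switching. -/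
def ControllableSLS {n m q N M : ℕ} (A : Fin q → Matrix (Fin n) (Fin n) ℝ)
    (B : Fin q → Matrix (Fin n) (Fin m) ℝ) (L : Fin M → Fin N → Fin N)
    (R : Fin M → Fin N → Fin q) : Prop :=
  ∀ x : Fin n → ℝ, ∃ T : ℕ, ∃ hT : 1 ≤ T, ∃ γ : Fin T → Fin M,
    ∀ θ₀ : Fin N, ∃ u : Fin T → (Fin m → ℝ),
      traj A B (switchSig L R θ₀ (extSeq hT γ)) (extSeq hT u) x T = 0

/-- Observability of the SLS under logically generated switching. -/
def ObservableSLS {n m p q N M : ℕ} (A : Fin q → Matrix (Fin n) (Fin n) ℝ)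
    (B : Fin q → Matrix (Fin n) (Fin m) ℝ) (C : Fin q → Matrix (Fin p) (Fin n) ℝ)
    (L : Fin M → Fin N → Fin N) (R : Fin M → Fin N → Fin q) : Prop :=
  ∃ T : ℕ, ∃ hT : 1 ≤ T, ∃ γ : Fin T → Fin M,
    ∀ (θ₀ : Fin N) (u : Fin T → (Fin m → ℝ)) (x₀ x₀' : Fin n → ℝ),
      (∀ t < T,
          (C (switchSig L R θ₀ (extSeq hT γ) t)).mulVec
            (traj A B (switchSig L R θ₀ (extSeq hT γ)) (extSeq hT u) x₀ t) =
          (C (switchSig L R θ₀ (extSeq hT γ) t)).mulVec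
            (traj A B (switchSig L R θ₀ (extSeq hT γ)) (extSeq hT u) x₀' t)) →
        x₀ = x₀'

/-- Reconstructibility of the SLS under logically generated switching. -/
def ReconstructibleSLS {n m p q N M : ℕ} (A : Fin q → Matrix (Fin n) (Fin n) ℝ)
    (B : Fin q → Matrix (Fin n) (Fin m) ℝ) (C : Fin q → Matrix (Fin p) (Fin n) ℝ)
    (L : Fin M → Fin N → Fin N) (R : Fin M → Fin N → Fin q) : Prop :=
  ∃ T : ℕ, ∃ hT : 1 ≤ T, ∃ γ : Fin T → Fin M,
    ∀ (θ₀ : Fin N) (u : Fin T → (Fin m → ℝ)) (x₀ x₀' : Fin n → ℝ),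
      (∀ t < T,
          (C (switchSig L R θ₀ (extSeq hT γ) t)).mulVec
            (traj A B (switchSig L R θ₀ (extSeq hT γ)) (extSeq hT u) x₀ t) =
          (C (switchSig L R θ₀ (extSeq hT γ) t)).mulVec
            (traj A B (switchSig L R θ₀ (extSeq hT γ)) (extSeq hT u) x₀' t)) →
        traj A B (switchSig L R θ₀ (extSeq hT γ)) (extSeq hT u) x₀ T =
          traj A B (switchSig L R θ₀ (extSeq hT γ)) (extSeq hT u) x₀' T

open Matrix in
lemma extSeq_lt {α : Type*} {T : ℕ} (hT : 0 < T) (γ : Fin T → α) {t : ℕ} (ht : t < T) :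
    extSeq hT γ t = γ ⟨t, ht⟩ := by
  unfold extSeq
  congr 1
  ext
  simp only
  omega

open Matrix in
lemma traj_congr {n m q : ℕ} (A : Fin q → Matrix (Fin n) (Fin n) ℝ)
    (B : Fin q → Matrix (Fin n) (Fin m) ℝ) (σ : ℕ → Fin q)
    (u u' : ℕ → Fin m → ℝ) (x₀ : Fin n → ℝ) (T : ℕ)
    (hu : ∀ t < T, u t = u' t) :
    traj A B σ u x₀ T = traj A B σ u' x₀ T := by
  induction T with
  | zero => rfl
  | succ T ih =>
    simp only [traj]
    rw [ih (fun t ht => hu t (by omega)), hu T (by omega)]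

open Matrix in
lemma mulVec_finset_sum {n k : ℕ} {ι : Type*} (M : Matrix (Fin n) (Fin k) ℝ)
    (s : Finset ι) (f : ι → Fin k → ℝ) :
    M *ᵥ (∑ i ∈ s, f i) = ∑ i ∈ s, M *ᵥ f i := by
  simp_rw [← Matrix.mulVecLin_apply]
  exact map_sum M.mulVecLin f s

open Matrix in
lemma traj_formula {n m q : ℕ} (A : Fin q → Matrix (Fin n) (Fin n) ℝ)
    (B : Fin q → Matrix (Fin n) (Fin m) ℝ) (σ : ℕ → Fin q)
    (u : ℕ → Fin m → ℝ) (x₀ : Fin n → ℝ) (T : ℕ) :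
    traj A B σ u x₀ T = (transMat A σ 0 T) *ᵥ x₀ +
      ∑ t ∈ Finset.range T, (transMat A σ (t + 1) T * B (σ t)) *ᵥ u t := by
  induction T with
  | zero => simp [traj, transMat]
  | succ T ih =>
    rw [show traj A B σ u x₀ (T + 1) =
        (A (σ T)).mulVec (traj A B σ u x₀ T) + (B (σ T)).mulVec (u T) from rfl, ih]
    have h0 : transMat A σ 0 (T + 1) = A (σ T) * transMat A σ 0 T := by
      simp [transMat]
    have hlast : transMat A σ (T + 1) (T + 1) * B (σ T) = B (σ T) := by
      simp [transMat]
    rw [Finset.sum_range_succ, hlast, h0]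
    have hmid : ∀ t ∈ Finset.range T,
        (transMat A σ (t + 1) (T + 1) * B (σ t)) *ᵥ u t =
          A (σ T) *ᵥ ((transMat A σ (t + 1) T * B (σ t)) *ᵥ u t) := by
      intro t ht
      simp only [Finset.mem_range] at ht
      have h1 : transMat A σ (t + 1) (T + 1) = A (σ T) * transMat A σ (t + 1) T := by
        rw [show transMat A σ (t + 1) (T + 1) =
          if t + 1 ≤ T then A (σ T) * transMat A σ (t + 1) T else 1 from rfl, if_pos (by omega)]
      rw [h1, Matrix.mul_assoc, ← Matrix.mulVec_mulVec]
    rw [Finset.sum_congr rfl hmid, Matrix.mulVec_add, ← Matrix.mulVec_mulVec,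
      mulVec_finset_sum]
    abel

open Matrix in
/-- The reachability-space description of steerability to zero. -/
lemma steer_iff {n m q : ℕ} (A : Fin q → Matrix (Fin n) (Fin n) ℝ)
    (B : Fin q → Matrix (Fin n) (Fin m) ℝ) (σ : ℕ → Fin q) (x : Fin n → ℝ) (T : ℕ) :
    (∃ u : ℕ → Fin m → ℝ, traj A B σ u x T = 0) ↔
      (transMat A σ 0 T) *ᵥ x ∈ ⨆ t : Fin T, LinearMap.range
        (Matrix.mulVecLin (transMat A σ ((t : ℕ) + 1) T * B (σ (t : ℕ)))) := by
  classical
  constructor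
  · rintro ⟨u, hu⟩
    rw [traj_formula] at hu
    have hΦ : transMat A σ 0 T *ᵥ x =
        -∑ t ∈ Finset.range T, (transMat A σ (t + 1) T * B (σ t)) *ᵥ u t :=
      eq_neg_of_add_eq_zero_left hu
    rw [hΦ, ← Finset.sum_neg_distrib,
      ← Fin.sum_univ_eq_sum_range (fun t => -((transMat A σ (t + 1) T * B (σ t)) *ᵥ u t))]
    refine Submodule.sum_mem _ fun t _ => ?_
    refine le_iSup (fun t : Fin T => LinearMap.range
      (Matrix.mulVecLin (transMat A σ ((t : ℕ) + 1) T * B (σ (t : ℕ))))) t ?_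
    exact ⟨-(u t), by rw [Matrix.mulVecLin_apply, Matrix.mulVec_neg]⟩
  · intro hx
    rw [Submodule.mem_iSup_iff_exists_finsupp] at hx
    obtain ⟨f, hf, hsum⟩ := hx
    choose c hc using fun t => LinearMap.mem_range.mp (hf t)
    refine ⟨fun t => if h : t < T then -(c ⟨t, h⟩) else 0, ?_⟩
    rw [traj_formula]
    have : ∑ t ∈ Finset.range T, (transMat A σ (t + 1) T * B (σ t)) *ᵥ
        (if h : t < T then -(c ⟨t, h⟩) else 0) = -((transMat A σ 0 T) *ᵥ x) := by
      rw [← Fin.sum_univ_eq_sum_range (fun t => (transMat A σ (t + 1) T * B (σ t)) *ᵥ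
        (if h : t < T then -(c ⟨t, h⟩) else 0))]
      have heq : ∀ t : Fin T, (transMat A σ ((t : ℕ) + 1) T * B (σ (t : ℕ))) *ᵥ
          (if h : (t : ℕ) < T then -(c ⟨(t : ℕ), h⟩) else 0) = -(f t) := by
        intro t
        rw [dif_pos t.isLt]
        rw [Matrix.mulVec_neg]
        congr 1
        rw [show (⟨(t : ℕ), t.isLt⟩ : Fin T) = t from rfl]
        exact hc t
      have hftot : ∑ t : Fin T, f t = transMat A σ 0 T *ᵥ x := by
        rw [← hsum]; exact (Finsupp.sum_fintype f (fun _ v => v) (fun i => rfl)).symm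
      rw [Finset.sum_congr rfl fun t _ => heq t, Finset.sum_neg_distrib, hftot]
    rw [this, add_neg_cancel]

/-- **Theorem 4.2 (controllability criterion).** -/
theorem controllability_criterion (n m p q N M : ℕ)
    (hn : 0 < n) (hm : 0 < m) (hp : 0 < p) (hq : 0 < q) (hN : 0 < N) (hM : 0 < M)
    (A : Fin q → Matrix (Fin n) (Fin n) ℝ) (B : Fin q → Matrix (Fin n) (Fin m) ℝ)
    (C : Fin q → Matrix (Fin p) (Fin n) ℝ)
    (L : Fin M → Fin N → Fin N) (R : Fin M → Fin N → Fin q) :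
    ControllableSLS A B L R ↔
      ∃ T : ℕ, ∃ hT : 1 ≤ T, ∃ γ : Fin T → Fin M, ∀ α : Fin N,
        LinearMap.range
            (Matrix.mulVecLin (transMat A (switchSig L R α (extSeq hT γ)) 0 T)) ≤
          ⨆ t : Fin T, LinearMap.range
            (Matrix.mulVecLin
              (transMat A (switchSig L R α (extSeq hT γ)) ((t : ℕ) + 1) T *
                B (switchSig L R α (extSeq hT γ) (t : ℕ)))) := by
  classical
  constructor
  · intro hc
    let ι := Σ T : {T : ℕ // 1 ≤ T}, (Fin T.1 → Fin M)
    let K : ι → Submodule ℝ (Fin n → ℝ) := fun i =>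
      ⨅ θ₀ : Fin N, Submodule.comap
        (Matrix.mulVecLin (transMat A (switchSig L R θ₀ (extSeq i.1.2 i.2)) 0 i.1.1))
        (⨆ t : Fin i.1.1, LinearMap.range
          (Matrix.mulVecLin
            (transMat A (switchSig L R θ₀ (extSeq i.1.2 i.2)) ((t : ℕ) + 1) i.1.1 *
              B (switchSig L R θ₀ (extSeq i.1.2 i.2) (t : ℕ)))))
    have hcover : ∀ x : Fin n → ℝ, ∃ i : ι, x ∈ K i := by
      intro x
      obtain ⟨T, hT, γ, hγ⟩ := hc x
      refine ⟨⟨⟨T, hT⟩, γ⟩, ?_⟩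
      rw [Submodule.mem_iInf]
      intro θ₀
      rw [Submodule.mem_comap, Matrix.mulVecLin_apply]
      obtain ⟨u, hu⟩ := hγ θ₀
      exact (steer_iff A B (switchSig L R θ₀ (extSeq hT γ)) x T).mp ⟨extSeq hT u, hu⟩
    have hclosed : ∀ i : ι, IsClosed ((K i : Set (Fin n → ℝ))) := fun i =>
      (K i).closed_of_finiteDimensional
    have hunion : ⋃ i : ι, (K i : Set (Fin n → ℝ)) = Set.univ := by
      rw [Set.eq_univ_iff_forall]
      intro x
      obtain ⟨i, hi⟩ := hcover x
      exact Set.mem_iUnion.mpr ⟨i, hi⟩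
    obtain ⟨i, hi⟩ := nonempty_interior_of_iUnion_of_closed hclosed hunion
    have htop : K i = ⊤ := Submodule.eq_top_of_nonempty_interior' _ hi
    refine ⟨i.1.1, i.1.2, i.2, ?_⟩
    intro α y hy
    obtain ⟨x, rfl⟩ := hy
    have hx : x ∈ K i := htop ▸ Submodule.mem_top
    rw [Submodule.mem_iInf] at hx
    exact hx α
  · rintro ⟨T, hT, γ, hcrit⟩ x
    refine ⟨T, hT, γ, fun θ₀ => ?_⟩
    have hmem := hcrit θ₀ (LinearMap.mem_range.mpr ⟨x, rfl⟩)
    rw [Matrix.mulVecLin_apply] at hmem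
    obtain ⟨u, hu⟩ := (steer_iff A B (switchSig L R θ₀ (extSeq hT γ)) x T).mpr hmem
    refine ⟨fun t => u t, ?_⟩
    rw [traj_congr A B _ _ u x T]
    · exact hu
    · intro t ht
      rw [extSeq_lt hT _ ht]
end

section
/- Theorem 5.1 (observability criterion): The SLS under logically generated switching is observable if and only if there exist T ≥ 1 and a logical input sequence γ : Fin T → Fin M such that for every initial logical state α ∈ Fin N, letting σ be the switching-signal sequence generated from α by γ, the submodule ⨆_{t = 0}^{T−1} LinearMap.range (Matrix.mulVecLin ((A (σ 0))ᵀ * (A (σ 1))ᵀ * ⋯ * (A (σ (t−1)))ᵀ * (C (σ t))ᵀ)) of (Fin n → ℝ) equals ⊤ (for t = 0 the product is just (C (σ 0))ᵀ). -/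
open Matrix

/-- Core linear-algebra fact: the sup of the ranges of the transposes is `⊤`
iff the common kernel is trivial. -/
lemma sup_range_transpose_eq_top_iff {n p : ℕ} {ι : Type*} [Fintype ι]
    (P : ι → Matrix (Fin p) (Fin n) ℝ) :
    (⨆ t, LinearMap.range ((P t)ᵀ.mulVecLin)) = ⊤ ↔
      ∀ x : Fin n → ℝ, (∀ t, (P t).mulVec x = 0) → x = 0 := by
  constructor
  · intro hS x hx
    set f : (Fin n → ℝ) →ₗ[ℝ] ℝ :=
      { toFun := fun v => v ⬝ᵥ x
        map_add' := fun a b => add_dotProduct a b x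
        map_smul' := fun c a => smul_dotProduct c a x }
    have hle : (⨆ t, LinearMap.range ((P t)ᵀ.mulVecLin)) ≤ LinearMap.ker f := by
      refine iSup_le fun t => ?_
      rintro v ⟨y, rfl⟩
      show ((P t)ᵀ *ᵥ y) ⬝ᵥ x = 0
      rw [Matrix.mulVec_transpose, ← Matrix.dotProduct_mulVec, hx t, dotProduct_zero]
    have : x ∈ LinearMap.ker f := hle (hS ▸ Submodule.mem_top)
    have : x ⬝ᵥ x = 0 := this
    exact dotProduct_self_eq_zero.mp this
  · intro h
    by_contra hS
    obtain ⟨f, hf, hmap⟩ :=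
      Submodule.exists_dual_map_eq_bot_of_lt_top (lt_top_iff_ne_top.mpr hS) inferInstance
    set w : Fin n → ℝ := fun j => f (fun i => if j = i then 1 else 0) with hw
    have hfw : ∀ v : Fin n → ℝ, f v = v ⬝ᵥ w := by
      intro v
      rw [LinearMap.pi_apply_eq_sum_univ f v]
      simp [dotProduct, hw]
    have hPw : ∀ t, (P t).mulVec w = 0 := by
      intro t
      funext j
      have hy : ((P t)ᵀ.mulVecLin) (fun i => if j = i then 1 else 0) ∈
          (⨆ t, LinearMap.range ((P t)ᵀ.mulVecLin)) :=
        le_iSup (fun t => LinearMap.range ((P t)ᵀ.mulVecLin)) t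
          (LinearMap.mem_range_self _ _)
      have h0 : f (((P t)ᵀ.mulVecLin) (fun i => if j = i then 1 else 0)) = 0 := by
        have := hmap ▸ Submodule.mem_map_of_mem (f := f) hy
        simpa using this
      rw [hfw] at h0
      have : ((P t)ᵀ *ᵥ (fun i => if j = i then 1 else 0)) ⬝ᵥ w = 0 := h0
      rw [Matrix.mulVec_transpose, ← Matrix.dotProduct_mulVec] at this
      simpa [dotProduct] using this
    have : w = 0 := h w hPw
    apply hf
    ext v
    simp [hfw, this]

/-- The difference of two trajectories with the same inputs is the transition
matrix applied to the difference of initial states. -/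
lemma traj_sub {n m q : ℕ} (A : Fin q → Matrix (Fin n) (Fin n) ℝ)
    (B : Fin q → Matrix (Fin n) (Fin m) ℝ) (σ : ℕ → Fin q)
    (u : ℕ → Fin m → ℝ) (x₀ x₀' : Fin n → ℝ) (t : ℕ) :
    traj A B σ u x₀ t - traj A B σ u x₀' t = (transMat A σ 0 t) *ᵥ (x₀ - x₀') := by
  induction t with
  | zero => simp [traj, transMat]
  | succ t ih =>
    show ((A (σ t)) *ᵥ (traj A B σ u x₀ t) + (B (σ t)) *ᵥ (u t))
        - ((A (σ t)) *ᵥ (traj A B σ u x₀' t) + (B (σ t)) *ᵥ (u t))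
        = (transMat A σ 0 (t + 1)) *ᵥ (x₀ - x₀')
    have : transMat A σ 0 (t + 1) = A (σ t) * transMat A σ 0 t := by
      simp [transMat]
    rw [this, ← Matrix.mulVec_mulVec, ← ih, Matrix.mulVec_sub]
    abel


/-- **Theorem 5.1 (observability criterion).** Note that
`(A (σ 0))ᵀ * ⋯ * (A (σ (t-1)))ᵀ = (A (σ (t-1)) * ⋯ * A (σ 0))ᵀ = (transMat A σ 0 t)ᵀ`. -/
theorem observability_criterion (n m p q N M : ℕ)
    (hn : 0 < n) (hm : 0 < m) (hp : 0 < p) (hq : 0 < q) (hN : 0 < N) (hM : 0 < M)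
    (A : Fin q → Matrix (Fin n) (Fin n) ℝ) (B : Fin q → Matrix (Fin n) (Fin m) ℝ)
    (C : Fin q → Matrix (Fin p) (Fin n) ℝ)
    (L : Fin M → Fin N → Fin N) (R : Fin M → Fin N → Fin q) :
    ObservableSLS A B C L R ↔
      ∃ T : ℕ, ∃ hT : 1 ≤ T, ∃ γ : Fin T → Fin M, ∀ α : Fin N,
        (⨆ t : Fin T, LinearMap.range
            (Matrix.mulVecLin
              ((transMat A (switchSig L R α (extSeq hT γ)) 0 (t : ℕ))ᵀ *
                (C (switchSig L R α (extSeq hT γ) (t : ℕ)))ᵀ))) = ⊤ := by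
  have key : ∀ (T : ℕ) (hT : 1 ≤ T) (γ : Fin T → Fin M) (α : Fin N),
      (⨆ t : Fin T, LinearMap.range
          (Matrix.mulVecLin
            ((transMat A (switchSig L R α (extSeq hT γ)) 0 (t : ℕ))ᵀ *
              (C (switchSig L R α (extSeq hT γ) (t : ℕ)))ᵀ))) = ⊤ ↔
      ∀ x : Fin n → ℝ, (∀ t : Fin T,
          (C (switchSig L R α (extSeq hT γ) (t : ℕ)) *
            transMat A (switchSig L R α (extSeq hT γ)) 0 (t : ℕ)).mulVec x = 0) → x = 0 := by
    intro T hT γ α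
    have := sup_range_transpose_eq_top_iff
      (fun t : Fin T => C (switchSig L R α (extSeq hT γ) (t : ℕ)) *
        transMat A (switchSig L R α (extSeq hT γ)) 0 (t : ℕ))
    simpa [Matrix.transpose_mul] using this
  constructor
  · rintro ⟨T, hT, γ, hobs⟩
    refine ⟨T, hT, γ, fun α => ?_⟩
    rw [key T hT γ α]
    intro x hx
    have := hobs α 0 x 0 ?_
    · simpa using this
    · intro t ht
      have hsub := traj_sub A B (switchSig L R α (extSeq hT γ)) (extSeq hT 0) x 0 t
      have hxx : (C (switchSig L R α (extSeq hT γ) t)) *ᵥ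
            (traj A B (switchSig L R α (extSeq hT γ)) (extSeq hT 0) x t)
          - (C (switchSig L R α (extSeq hT γ) t)) *ᵥ
            (traj A B (switchSig L R α (extSeq hT γ)) (extSeq hT 0) 0 t) = 0 := by
        rw [← Matrix.mulVec_sub, hsub, sub_zero, Matrix.mulVec_mulVec]
        exact hx ⟨t, ht⟩
      exact sub_eq_zero.mp hxx
  · rintro ⟨T, hT, γ, hcrit⟩
    refine ⟨T, hT, γ, fun θ₀ u x₀ x₀' hout => ?_⟩
    have hk := (key T hT γ θ₀).mp (hcrit θ₀)
    have hd : x₀ - x₀' = 0 := by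
      apply hk
      intro t
      rw [← Matrix.mulVec_mulVec,
        ← traj_sub A B (switchSig L R θ₀ (extSeq hT γ)) (extSeq hT u) x₀ x₀' (t : ℕ),
        Matrix.mulVec_sub, hout (t : ℕ) t.2, sub_self]
    exact sub_eq_zero.mp hd
end

section
/- Remark 5.2: If the matrix A i is invertible for every i ∈ Fin q (i.e., the switched linear system is reversible), then the SLS under logically generated switching is observable if and only if it is reconstructible. -/
lemma traj_injective_of_invertible {n m q : ℕ}
    (A : Fin q → Matrix (Fin n) (Fin n) ℝ) (B : Fin q → Matrix (Fin n) (Fin m) ℝ)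
    (σ : ℕ → Fin q) (u : ℕ → Fin m → ℝ) (hA : ∀ i : Fin q, IsUnit (A i))
    (x₀ x₀' : Fin n → ℝ) (t : ℕ)
    (h : traj A B σ u x₀ t = traj A B σ u x₀' t) : x₀ = x₀' := by
  induction t with
  | zero => exact h
  | succ t ih =>
    apply ih
    have h' : (A (σ t)).mulVec (traj A B σ u x₀ t) =
        (A (σ t)).mulVec (traj A B σ u x₀' t) := by
      have := h
      simp only [traj] at this
      exact add_right_cancel this
    have hdet : IsUnit (A (σ t)).det :=
      (Matrix.isUnit_iff_isUnit_det _).mp (hA (σ t))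
    have := congrArg ((A (σ t))⁻¹.mulVec ·) h'
    simpa [Matrix.mulVec_mulVec, Matrix.nonsing_inv_mul _ hdet] using this

/-- **Remark 5.2.** If every `A i` is invertible (the system is reversible),
then observability and reconstructibility of the SLS under logically generated
switching are equivalent. -/
theorem observable_iff_reconstructible_of_invertible (n m p q N M : ℕ)
    (hn : 0 < n) (hm : 0 < m) (hp : 0 < p) (hq : 0 < q) (hN : 0 < N) (hM : 0 < M)
    (A : Fin q → Matrix (Fin n) (Fin n) ℝ) (B : Fin q → Matrix (Fin n) (Fin m) ℝ)
    (C : Fin q → Matrix (Fin p) (Fin n) ℝ)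
    (L : Fin M → Fin N → Fin N) (R : Fin M → Fin N → Fin q)
    (hA : ∀ i : Fin q, IsUnit (A i)) :
    ObservableSLS A B C L R ↔ ReconstructibleSLS A B C L R := by
  constructor
  · rintro ⟨T, hT, γ, hobs⟩
    exact ⟨T, hT, γ, fun θ₀ u x₀ x₀' h => by rw [hobs θ₀ u x₀ x₀' h]⟩
  · rintro ⟨T, hT, γ, hrec⟩
    exact ⟨T, hT, γ, fun θ₀ u x₀ x₀' h =>
      traj_injective_of_invertible A B _ _ hA x₀ x₀' T (hrec θ₀ u x₀ x₀' h)⟩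
end

section
/- Proposition 2.2.1(1): For every i ∈ Fin b and j ∈ Fin a, the entry (C_ℓ) i j is positive if and only if the network is ℓ-step input-state set reachable from Ω⁰ j to Ωᵈ i, i.e., there exists an ℓ-step input-state trajectory (γ 0, θ 0), …, (γ ℓ, θ ℓ) with (γ 0, θ 0) ∈ Ω⁰ j and (γ ℓ, θ ℓ) ∈ Ωᵈ i. -/
attribute [local instance] Classical.propDecidable

/-- The input-state matrix `𝐋` of the logical control network `L`:
`𝐋 (γ', θ') (γ, θ) = 1` if `θ' = L γ θ` and `0` otherwise. -/
def inputStateMat {M N : ℕ} (L : Fin M → Fin N → Fin N) :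
    Matrix (Fin M × Fin N) (Fin M × Fin N) ℕ :=
  fun p' p => if p'.2 = L p.1 p.2 then 1 else 0

/-- The index matrix of a finite family of input-state subsets. -/
noncomputable def idxMat {M N s : ℕ} (Ω : Fin s → Set (Fin M × Fin N)) :
    Matrix (Fin M × Fin N) (Fin s) ℕ :=
  fun v j => if v ∈ Ω j then 1 else 0

/-- The `ℓ`-step input-state set reachability matrix
`C_ℓ = (P_{Ωᵈ})ᵀ * 𝐋^ℓ * P_{Ω⁰}`. -/
noncomputable def reachMat {M N a b : ℕ} (L : Fin M → Fin N → Fin N) (ℓ : ℕ)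
    (Ω0 : Fin a → Set (Fin M × Fin N)) (Ωd : Fin b → Set (Fin M × Fin N)) :
    Matrix (Fin b) (Fin a) ℕ :=
  (idxMat Ωd).transpose * (inputStateMat L) ^ ℓ * idxMat Ω0

/-- `w : Fin (ℓ+1) → Fin M × Fin N` is an `ℓ`-step input-state trajectory of the
logical control network `L`: `θ (t+1) = L (γ t) (θ t)` for all `t < ℓ`. -/
def IsISTraj {M N : ℕ} (L : Fin M → Fin N → Fin N) (ℓ : ℕ)
    (w : Fin (ℓ + 1) → Fin M × Fin N) : Prop :=
  ∀ t : Fin ℓ, (w t.succ).2 = L (w t.castSucc).1 (w t.castSucc).2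

lemma sum_pos_iff_nat {ι : Type*} [Fintype ι] (f : ι → ℕ) :
    0 < ∑ x, f x ↔ ∃ x, 0 < f x := by
  simp [Nat.pos_iff_ne_zero, Finset.sum_eq_zero_iff, not_forall]

lemma nat_pos_left {x y : ℕ} (h : 0 < x * y) : 0 < x :=
  Nat.pos_of_ne_zero (by rintro rfl; simp at h)

lemma nat_pos_right {x y : ℕ} (h : 0 < x * y) : 0 < y :=
  Nat.pos_of_ne_zero (by rintro rfl; simp at h)

lemma pow_entry_pos_iff {M N : ℕ} (L : Fin M → Fin N → Fin N) (n : ℕ)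
    (q p : Fin M × Fin N) :
    0 < ((inputStateMat L) ^ n) q p ↔
      ∃ w : Fin (n + 1) → Fin M × Fin N,
        IsISTraj L n w ∧ w 0 = p ∧ w (Fin.last n) = q := by
  induction n generalizing q p with
  | zero =>
      simp only [pow_zero, Matrix.one_apply]
      constructor
      · intro h
        have : q = p := by by_contra hne; simp [hne] at h
        exact ⟨fun _ => p, fun t => t.elim0, rfl, by simp [this]⟩
      · rintro ⟨w, -, h0, hl⟩
        have : q = p := by rw [← h0, ← hl]; rfl
        simp [this]
  | succ n ih =>
      rw [pow_succ]
      rw [Matrix.mul_apply]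
      rw [sum_pos_iff_nat]
      constructor
      · rintro ⟨r, hr⟩
        have h1 : 0 < ((inputStateMat L) ^ n) q r := nat_pos_left hr
        have h2 : 0 < inputStateMat L r p := nat_pos_right hr
        have hr2 : r.2 = L p.1 p.2 := by
          by_contra hne; simp [inputStateMat, hne] at h2
        obtain ⟨w, hw, hw0, hwl⟩ := (ih q r).mp h1
        · refine ⟨Fin.cons p w, ?_, ?_, ?_⟩
          · intro t
            induction t using Fin.cases with
            | zero =>
                rw [Fin.cons_succ, Fin.castSucc_zero, Fin.cons_zero, hw0]
                exact hr2
            | succ s =>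
                rw [← Fin.succ_castSucc, Fin.cons_succ, Fin.cons_succ]
                exact hw s
          · exact Fin.cons_zero _ _
          · rw [← Fin.succ_last, Fin.cons_succ, hwl]
      · rintro ⟨w, hw, hw0, hwl⟩
        refine ⟨w 1, ?_⟩
        have h1 : 0 < ((inputStateMat L) ^ n) q (w 1) := by
          rw [ih]
          refine ⟨fun t => w t.succ, fun t => ?_, rfl, by simp only []; rw [Fin.succ_last]; exact hwl⟩
          have := hw t.succ
          rwa [← Fin.succ_castSucc] at this
        have h2 : 0 < inputStateMat L (w 1) p := by
          have := hw 0
          simp only [Fin.succ_zero_eq_one, Fin.castSucc_zero, hw0] at this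
          simp [inputStateMat, this]
        exact Nat.mul_pos h1 h2

/-- **Proposition 2.2.1(1).** `(C_ℓ) i j > 0` iff the network is `ℓ`-step
input-state set reachable from `Ω⁰ j` to `Ωᵈ i`. -/
theorem reachMat_entry_pos_iff (M N ℓ a b : ℕ)
    (hM : 0 < M) (hN : 0 < N) (hℓ : 1 ≤ ℓ)
    (L : Fin M → Fin N → Fin N)
    (Ω0 : Fin a → Set (Fin M × Fin N)) (Ωd : Fin b → Set (Fin M × Fin N))
    (i : Fin b) (j : Fin a) :
    0 < reachMat L ℓ Ω0 Ωd i j ↔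
      ∃ w : Fin (ℓ + 1) → Fin M × Fin N,
        IsISTraj L ℓ w ∧ w 0 ∈ Ω0 j ∧ w (Fin.last ℓ) ∈ Ωd i := by
  unfold reachMat
  rw [Matrix.mul_apply, sum_pos_iff_nat]
  constructor
  · rintro ⟨p, hp⟩
    have h1 : 0 < ((idxMat Ωd).transpose * (inputStateMat L) ^ ℓ) i p :=
      nat_pos_left hp
    have h2 : 0 < idxMat Ω0 p j := nat_pos_right hp
    have hp0 : p ∈ Ω0 j := by by_contra h; simp [idxMat, h] at h2
    rw [Matrix.mul_apply, sum_pos_iff_nat] at h1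
    obtain ⟨q, hq⟩ := h1
    have h3 : 0 < idxMat Ωd q i := by
      have := nat_pos_left hq
      simpa [Matrix.transpose_apply] using this
    have h4 : 0 < ((inputStateMat L) ^ ℓ) q p := nat_pos_right hq
    have hqd : q ∈ Ωd i := by by_contra h; simp [idxMat, h] at h3
    obtain ⟨w, hw, hw0, hwl⟩ := (pow_entry_pos_iff L ℓ q p).mp h4
    exact ⟨w, hw, hw0 ▸ hp0, hwl ▸ hqd⟩
  · rintro ⟨w, hw, hw0, hwl⟩
    refine ⟨w 0, ?_⟩
    have h4 : 0 < ((inputStateMat L) ^ ℓ) (w (Fin.last ℓ)) (w 0) :=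
      (pow_entry_pos_iff L ℓ _ _).mpr ⟨w, hw, rfl, rfl⟩
    have h1 : 0 < ((idxMat Ωd).transpose * (inputStateMat L) ^ ℓ) i (w 0) := by
      rw [Matrix.mul_apply, sum_pos_iff_nat]
      exact ⟨w (Fin.last ℓ), Nat.mul_pos (by simp [idxMat, Matrix.transpose_apply, hwl]) h4⟩
    exact Nat.mul_pos h1 (by simp [idxMat, hw0])
end

section
/- Corollary 6.1 (minimum dwell time): Suppose that for every i ∈ Fin q and every (γ, θ) ∈ Fin M × Fin N with R γ θ = i there exist γ' ∈ Fin M with R γ' (L γ θ) ≠ i and γ'' ∈ Fin M with R γ'' (L γ θ) = i. Then for every initial logical state θ₀ ∈ Fin N there exists a logical input sequence γ : ℕ → Fin M such that the switching signal σ generated from θ₀ by γ respects the minimum dwell times d̲. -/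
/-- A switching signal `σ` respects the minimum dwell times `d̲ : Fin q → ℕ` if,
whenever a run of a mode starts at time `s` (i.e. `s = 0` or `σ (s-1) ≠ σ s`),
`σ` stays at `σ s` on `[s, s + d̲ (σ s))`. -/
def RespectsMDT {q : ℕ} (dm : Fin q → ℕ) (σ : ℕ → Fin q) : Prop :=
  ∀ s : ℕ, (s = 0 ∨ σ (s - 1) ≠ σ s) →
    ∀ t, s ≤ t → t < s + dm (σ s) → σ t = σ s

/-- **Corollary 6.1 (minimum dwell time realizability).** -/
theorem mdt_realizability (q N M : ℕ) (hq : 0 < q) (hN : 0 < N) (hM : 0 < M)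
    (L : Fin M → Fin N → Fin N) (R : Fin M → Fin N → Fin q)
    (dm : Fin q → ℕ) (hdm : ∀ i, 1 ≤ dm i)
    (h : ∀ (i : Fin q) (γ : Fin M) (θ : Fin N), R γ θ = i →
      (∃ γ' : Fin M, R γ' (L γ θ) ≠ i) ∧ (∃ γ'' : Fin M, R γ'' (L γ θ) = i)) :
    ∀ θ₀ : Fin N, ∃ γ : ℕ → Fin M, RespectsMDT dm (switchSig L R θ₀ γ) := by
  classical
  intro θ₀
  -- choice functions: keep the current mode / switch away from it
  set keep : Fin M → Fin N → Fin M := fun g θ => (h (R g θ) g θ rfl).2.choose with hkeepdef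
  set sw : Fin M → Fin N → Fin M := fun g θ => (h (R g θ) g θ rfl).1.choose with hswdef
  have hkeepP : ∀ g θ, R (keep g θ) (L g θ) = R g θ :=
    fun g θ => (h (R g θ) g θ rfl).2.choose_spec
  have hswP : ∀ g θ, R (sw g θ) (L g θ) ≠ R g θ :=
    fun g θ => (h (R g θ) g θ rfl).1.choose_spec
  -- the controlled trajectory: (logical state, current input, steps spent in current run)
  set step : Fin N × Fin M × ℕ → Fin N × Fin M × ℕ := fun s =>
    if s.2.2 + 1 < dm (R s.2.1 s.1) then (L s.2.1 s.1, keep s.2.1 s.1, s.2.2 + 1)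
    else (L s.2.1 s.1, sw s.2.1 s.1, 0) with hstepdef
  set traj : ℕ → Fin N × Fin M × ℕ := fun t => step^[t] (θ₀, ⟨0, hM⟩, 0) with htrajdef
  have htraj0 : traj 0 = (θ₀, ⟨0, hM⟩, 0) := rfl
  have htrajS : ∀ t, traj (t + 1) = step (traj t) := by
    intro t
    simp only [htrajdef, Function.iterate_succ_apply']
  set γ : ℕ → Fin M := fun t => (traj t).2.1 with hγdef
  have hstate : ∀ t, logicState L θ₀ γ t = (traj t).1 := by
    intro t
    induction t with
    | zero => rfl
    | succ t ih =>
      have : logicState L θ₀ γ (t + 1) = L (γ t) (logicState L θ₀ γ t) := rfl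
      rw [this, ih, htrajS t, hstepdef]
      by_cases hc : (traj t).2.2 + 1 < dm (R (traj t).2.1 (traj t).1)
      · simp [hc, hγdef]
      · simp [hc, hγdef]
  have hsig : ∀ t, switchSig L R θ₀ γ t = R ((traj t).2.1) ((traj t).1) := by
    intro t
    show R (γ t) (logicState L θ₀ γ t) = _
    rw [hstate t]
  set σ : ℕ → Fin q := switchSig L R θ₀ γ with hσdef
  set k : ℕ → ℕ := fun t => (traj t).2.2 with hkdef
  -- case analysis on the step
  have hcase : ∀ t, (k t + 1 < dm (σ t) ∧ σ (t + 1) = σ t ∧ k (t + 1) = k t + 1) ∨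
      (¬ (k t + 1 < dm (σ t)) ∧ σ (t + 1) ≠ σ t ∧ k (t + 1) = 0) := by
    intro t
    have hσt : σ t = R ((traj t).2.1) ((traj t).1) := hsig t
    by_cases hc : (traj t).2.2 + 1 < dm (R (traj t).2.1 (traj t).1)
    · left
      have htn : traj (t + 1) = (L (traj t).2.1 (traj t).1, keep (traj t).2.1 (traj t).1,
          (traj t).2.2 + 1) := by rw [htrajS t, hstepdef]; simp [hc]
      refine ⟨by rw [hσt]; exact hc, ?_, ?_⟩
      · rw [hsig (t + 1), htn, hσt]
        exact hkeepP _ _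
      · simp [hkdef, htn]
    · right
      have htn : traj (t + 1) = (L (traj t).2.1 (traj t).1, sw (traj t).2.1 (traj t).1, 0) := by
        rw [htrajS t, hstepdef]; simp [hc]
      refine ⟨by rw [hσt]; exact hc, ?_, ?_⟩
      · rw [hsig (t + 1), htn, hσt]
        exact hswP _ _
      · simp [hkdef, htn]
  -- at a run start, the counter is zero
  have hstart : ∀ s, (s = 0 ∨ σ (s - 1) ≠ σ s) → k s = 0 := by
    intro s hs
    rcases hs with rfl | hs
    · rfl
    · rcases s with _ | u
      · rfl
      · rcases hcase u with ⟨_, heq, _⟩ | ⟨_, _, h0⟩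
        · exact absurd heq.symm (by simpa using hs)
        · exact h0
  -- main dwell-time argument
  refine ⟨γ, ?_⟩
  intro s hs t hst hlt
  have hk0 : k s = 0 := hstart s hs
  obtain ⟨n, rfl⟩ := Nat.exists_eq_add_of_le hst
  clear hst
  have key : ∀ n, s + n < s + dm (σ s) → σ (s + n) = σ s ∧ k (s + n) = n := by
    intro n
    induction n with
    | zero => exact fun _ => ⟨rfl, hk0⟩
    | succ n ih =>
      intro hn
      have hn' : s + n < s + dm (σ s) := by omega
      obtain ⟨hσn, hkn⟩ := ih hn'
      rcases hcase (s + n) with ⟨_, heq, hkk⟩ | ⟨hnot, _, _⟩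
      · constructor
        · rw [show s + (n + 1) = s + n + 1 by ring, heq, hσn]
        · rw [show s + (n + 1) = s + n + 1 by ring, hkk, hkn]
      · exfalso
        apply hnot
        rw [hkn, hσn]
        omega
  exact (key n hlt).1
end

section
/- Theorem on finite reference signal tracking (Theorem for σ-tracking): The reference signal sequence σ_ref is trackable from θ₀ if and only if every one of the sets S_0, S_1, …, S_τ is nonempty, where the sets S_t ⊆ Fin M × Fin N are defined recursively by S_0 = {(γ, θ₀) : γ ∈ Fin M, R γ θ₀ = σ_ref 0} and S_{t+1} = {(γ, θ) : R γ θ = σ_ref (t+1) and there exists (γ', θ') ∈ S_t with θ = L γ' θ'}. -/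
/-- The reference sequence `σref : Fin (τ+1) → Fin q` is trackable from `θ₀` if
some logical input sequence `γ` generates exactly the signals `σref t`, `t ≤ τ`. -/
def Trackable {q N M : ℕ} (L : Fin M → Fin N → Fin N) (R : Fin M → Fin N → Fin q)
    (θ₀ : Fin N) (τ : ℕ) (σref : Fin (τ + 1) → Fin q) : Prop :=
  ∃ γ : Fin (τ + 1) → Fin M, ∀ t : Fin (τ + 1),
    R (γ t) (logicState L θ₀ (extSeq (Nat.succ_pos τ) γ) (t : ℕ)) = σref t

/-- The recursively defined sets `S_t` of input-state pairs compatible with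
tracking the reference signal: `S_0 = {(γ, θ₀) : R γ θ₀ = σref 0}` and
`S_{t+1} = {(γ, θ) : R γ θ = σref (t+1), ∃ (γ', θ') ∈ S_t, θ = L γ' θ'}`,
where `σ' : ℕ → Fin q` is the reference signal (as a sequence). -/
def trackSet {q N M : ℕ} (L : Fin M → Fin N → Fin N) (R : Fin M → Fin N → Fin q)
    (θ₀ : Fin N) (σ' : ℕ → Fin q) : ℕ → Set (Fin M × Fin N)
  | 0 => {p | p.2 = θ₀ ∧ R p.1 p.2 = σ' 0}
  | t + 1 => {p | R p.1 p.2 = σ' (t + 1) ∧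
      ∃ p' ∈ trackSet L R θ₀ σ' t, p.2 = L p'.1 p'.2}

lemma extSeq_eq {α : Type*} {T : ℕ} (hT : 0 < T) (γ : Fin T → α) (t : ℕ)
    (h : t < T) : extSeq hT γ t = γ ⟨t, h⟩ := by
  unfold extSeq
  congr 1
  exact Fin.ext (by simp; omega)

lemma logicState_congr {N M : ℕ} (L : Fin M → Fin N → Fin N) (θ₀ : Fin N)
    {γ₁ γ₂ : ℕ → Fin M} : ∀ n, (∀ t < n, γ₁ t = γ₂ t) →
    logicState L θ₀ γ₁ n = logicState L θ₀ γ₂ n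
  | 0, _ => rfl
  | n + 1, h => by
      simp only [logicState, h n (by omega),
        logicState_congr L θ₀ n (fun t ht => h t (by omega))]

lemma chain {q N M : ℕ} (L : Fin M → Fin N → Fin N) (R : Fin M → Fin N → Fin q)
    (θ₀ : Fin N) (σ' : ℕ → Fin q) :
    ∀ n, ∀ p ∈ trackSet L R θ₀ σ' n, ∃ γ : ℕ → Fin M,
      γ n = p.1 ∧ logicState L θ₀ γ n = p.2 ∧
      ∀ t ≤ n, R (γ t) (logicState L θ₀ γ t) = σ' t := by
  intro n
  induction n with
  | zero =>
      intro p hp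
      obtain ⟨h1, h2⟩ := hp
      refine ⟨fun _ => p.1, rfl, h1.symm, ?_⟩
      intro t ht
      interval_cases t
      simpa [logicState, h1] using h2
  | succ n ih =>
      intro p hp
      obtain ⟨hR, p', hp', hLp⟩ := hp
      obtain ⟨γ', hγ'1, hγ'2, hγ'3⟩ := ih p' hp'
      refine ⟨fun t => if t ≤ n then γ' t else p.1, ?_, ?_, ?_⟩
      · simp
      · have hst : logicState L θ₀ (fun t => if t ≤ n then γ' t else p.1) n
            = logicState L θ₀ γ' n :=
          logicState_congr L θ₀ n (fun t ht => by simp [Nat.le_of_lt ht])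
        simp only [logicState, hst, hγ'2, if_pos (le_refl n), hγ'1, hLp]
      · intro t ht
        rcases Nat.lt_or_ge t (n + 1) with h | h
        · have hst : logicState L θ₀ (fun s => if s ≤ n then γ' s else p.1) t
              = logicState L θ₀ γ' t :=
            logicState_congr L θ₀ t (fun s hs => by
              simp [show s ≤ n by omega])
          rw [hst]
          simp only [show t ≤ n by omega, if_pos]
          exact hγ'3 t (by omega)
        · have ht' : t = n + 1 := by omega
          subst ht'
          have hst : logicState L θ₀ (fun s => if s ≤ n then γ' s else p.1) n
              = logicState L θ₀ γ' n :=
            logicState_congr L θ₀ n (fun s hs => by simp [Nat.le_of_lt hs])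
          simp only [logicState, hst, hγ'2, if_pos (le_refl n), hγ'1, ← hLp,
            Nat.lt_irrefl, if_neg (by omega : ¬ n + 1 ≤ n)]
          exact hR

/-- **Theorem on finite reference signal tracking (σ-tracking).** `σref` is
trackable from `θ₀` iff each of the sets `S_0, S_1, …, S_τ` is nonempty. -/
theorem trackable_iff_trackSets_nonempty (q N M τ : ℕ)
    (hq : 0 < q) (hN : 0 < N) (hM : 0 < M)
    (L : Fin M → Fin N → Fin N) (R : Fin M → Fin N → Fin q)
    (θ₀ : Fin N) (σref : Fin (τ + 1) → Fin q) :
    Trackable L R θ₀ τ σref ↔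
      ∀ t : Fin (τ + 1),
        (trackSet L R θ₀ (extSeq (Nat.succ_pos τ) σref) (t : ℕ)).Nonempty := by
  set σ' := extSeq (Nat.succ_pos τ) σref with hσ'
  have hσeq : ∀ t : Fin (τ + 1), σ' (t : ℕ) = σref t := by
    intro t
    rw [hσ', extSeq_eq _ _ _ t.isLt]
  constructor
  · rintro ⟨γ, hγ⟩
    set γ' := extSeq (Nat.succ_pos τ) γ with hγ'
    have hγeq : ∀ t : Fin (τ + 1), γ' (t : ℕ) = γ t := by
      intro t
      rw [hγ', extSeq_eq _ _ _ t.isLt]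
    -- membership by induction on t
    have key : ∀ n (hn : n ≤ τ),
        (γ' n, logicState L θ₀ γ' n) ∈ trackSet L R θ₀ σ' n := by
      intro n
      induction n with
      | zero =>
          intro _
          refine ⟨rfl, ?_⟩
          have := hγ ⟨0, by omega⟩
          simpa [hγeq ⟨0, by omega⟩, hσeq ⟨0, by omega⟩] using this
      | succ n ih =>
          intro hn
          refine ⟨?_, (γ' n, logicState L θ₀ γ' n), ih (by omega), rfl⟩
          have := hγ ⟨n + 1, by omega⟩
          simpa [hγeq ⟨n + 1, by omega⟩, hσeq ⟨n + 1, by omega⟩] using this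
    intro t
    exact ⟨_, key t.val (by omega)⟩
  · intro h
    obtain ⟨p, hp⟩ := h (Fin.last τ)
    obtain ⟨γ, _, _, hγ3⟩ := chain L R θ₀ σ' τ p (by simpa using hp)
    refine ⟨fun t => γ t.val, ?_⟩
    intro t
    have hst : logicState L θ₀ (extSeq (Nat.succ_pos τ) fun s => γ s.val) t.val
        = logicState L θ₀ γ t.val := by
      apply logicState_congr
      intro s hs
      rw [extSeq_eq _ _ _ (by omega : s < τ + 1)]
    rw [hst, ← hσeq t]
    exact hγ3 t.val (by omega)
end

section
/- Block structure of products of the merged-system matrices (established in the proofs of Theorems 4.1 and 4.2): Define G : Fin M → Matrix (Fin N × Fin n) (Fin N × Fin n) ℝ by G γ ((α, i), (β, j)) = (A (R γ β)) i j if L γ β = α, and 0 otherwise. Fix T ≥ 1, a logical input sequence γ : Fin T → Fin M and β ∈ Fin N; let θ 0 = β, θ (t+1) = L (γ t) (θ t), and σ t = R (γ t) (θ t). Then for all α ∈ Fin N and all i, j ∈ Fin n: (G (γ (T−1)) * G (γ (T−2)) * ⋯ * G (γ 0)) ((α, i), (β, j)) equals (A (σ (T−1)) * A (σ (T−2)) *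 ⋯ * A (σ 0)) i j if α = θ T, and equals 0 otherwise. In particular, in the block form of the product, the column of blocks indexed by β contains at most one nonzero n × n block, located at row-block θ T, and that block equals A (σ (T−1)) ⋯ A (σ 0). -/
/-- `matProd F T = F (T-1) * F (T-2) * ⋯ * F 0` (and `1` for `T = 0`). -/
def matProd {α : Type*} [Fintype α] [DecidableEq α]
    (F : ℕ → Matrix α α ℝ) : ℕ → Matrix α α ℝ
  | 0 => 1
  | T + 1 => F T * matProd F T

/-- The block matrices of the merged system:
`G γ ((α, i), (β, j)) = (A (R γ β)) i j` if `L γ β = α`, and `0` otherwise. -/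
def blockG {n q N M : ℕ} (A : Fin q → Matrix (Fin n) (Fin n) ℝ)
    (L : Fin M → Fin N → Fin N) (R : Fin M → Fin N → Fin q) (γ : Fin M) :
    Matrix (Fin N × Fin n) (Fin N × Fin n) ℝ :=
  fun p p' => if L γ p'.1 = p.1 then A (R γ p'.1) p.2 p'.2 else 0

lemma blockG_prod_aux {n q N M : ℕ} (A : Fin q → Matrix (Fin n) (Fin n) ℝ)
    (L : Fin M → Fin N → Fin N) (R : Fin M → Fin N → Fin q) :
    ∀ (T : ℕ) (g : ℕ → Fin M) (β α : Fin N) (i j : Fin n),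
      matProd (fun t => blockG A L R (g t)) T (α, i) (β, j) =
      if α = logicState L β g T then
        matProd (fun t => A (R (g t) (logicState L β g t))) T i j
      else 0 := by
  intro T
  induction T with
  | zero =>
    intro g β α i j
    simp [matProd, logicState, Matrix.one_apply, Prod.ext_iff, ite_and]
    split_ifs <;> simp_all
  | succ T ih =>
    intro g β α i j
    show ((blockG A L R (g T)) * matProd (fun t => blockG A L R (g t)) T)
        (α, i) (β, j) = _
    rw [Matrix.mul_apply, Fintype.sum_prod_type]
    simp only [ih, blockG, mul_ite, ite_mul, mul_zero, zero_mul]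
    rw [Finset.sum_eq_single (logicState L β g T)]
    · by_cases h : α = logicState L β g (T + 1)
      · have h' : L (g T) (logicState L β g T) = α := by
          rw [h]; rfl
        simp only [h', if_pos rfl, if_pos h, if_true]
        show _ = ((A (R (g T) (logicState L β g T))) *
          matProd (fun t => A (R (g t) (logicState L β g t))) T) i j
        rw [Matrix.mul_apply]
      · have h' : ¬ L (g T) (logicState L β g T) = α := by
          intro hc; exact h (hc ▸ rfl)
        simp [h', h]
    · intro b _ hb
      simp [hb]
    · simp

/-- **Block structure of products of the merged-system matrices.** For a logical
input sequence `γ` with logical state trajectory `θ` (from `θ 0 = β`) and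
switching signals `σ t = R (γ t) (θ t)`:
`(G (γ (T-1)) * ⋯ * G (γ 0)) ((α, i), (β, j))` equals
`(A (σ (T-1)) * ⋯ * A (σ 0)) i j` if `α = θ T`, and `0` otherwise. -/
theorem blockG_prod_structure (n q N M T : ℕ)
    (hn : 0 < n) (hq : 0 < q) (hN : 0 < N) (hM : 0 < M) (hT : 1 ≤ T)
    (A : Fin q → Matrix (Fin n) (Fin n) ℝ)
    (L : Fin M → Fin N → Fin N) (R : Fin M → Fin N → Fin q)
    (γ : Fin T → Fin M) (β : Fin N) (α : Fin N) (i j : Fin n) :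
    matProd (fun t => blockG A L R (extSeq hT γ t)) T (α, i) (β, j) =
      if α = logicState L β (extSeq hT γ) T then
        matProd
          (fun t => A (R (extSeq hT γ t) (logicState L β (extSeq hT γ) t))) T i j
      else 0 := by
  exact blockG_prod_aux A L R T (extSeq hT γ) β α i j
end
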